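/- Let α ∈ (1/2, 1), s > (1−α)/2, and c < 2s + α − 1. Then sup over n ∈ ℤ of the sum over pairs of nonzero integers (k, j) with 0 < |kj| ≲ |n|^{2−2α} of ⟨n⟩^{2s+2c}/(⟨n+j⟩^{2s} ⟨n+k⟩^{2s} ⟨n+j+k⟩^{2s}) is finite; the sum is bounded by C ⟨n⟩^{−4s+2c+2−2α} log⟨n⟩. -/

import Mathlib

open Real

/-- Japanese bracket of an integer. -/
noncomputable def jb (m : ℤ) : ℝ := Real.sqrt (1 + (m : ℝ) ^ 2)

lemma jb_pos (m : ℤ) : 0 < jb m := Real.sqrt_pos.2 (by positivity)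

lemma one_le_jb (m : ℤ) : 1 ≤ jb m := by
  rw [show (1:ℝ) = Real.sqrt 1 by simp [Real.sqrt_one]]
  exact Real.sqrt_le_sqrt (by nlinarith [sq_nonneg ((m:ℝ))])

lemma abs_le_jb (m : ℤ) : ((|m| : ℤ) : ℝ) ≤ jb m := by
  have : ((|m| : ℤ) : ℝ) = Real.sqrt ((m:ℝ)^2) := by
    rw [Real.sqrt_sq_eq_abs]; push_cast; simp
  rw [this]
  exact Real.sqrt_le_sqrt (by nlinarith)

lemma jb_le_two_mul (m n : ℤ) (h : ((|n| : ℤ) : ℝ) ≤ 2 * ((|m| : ℤ) : ℝ)) :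
    jb n ≤ 2 * jb m := by
  have h2 : (2:ℝ) * jb m = Real.sqrt (4 * (1 + (m:ℝ)^2)) := by
    rw [show (4:ℝ) = 2^2 by norm_num, Real.sqrt_mul (by positivity), Real.sqrt_sq (by norm_num)]; rfl
  rw [h2]
  apply Real.sqrt_le_sqrt
  have hn : |(n:ℝ)| ≤ 2 * |(m:ℝ)| := by push_cast at h ⊢; exact h
  nlinarith [abs_nonneg ((n:ℝ)), abs_nonneg ((m:ℝ)), sq_abs ((n:ℝ)), sq_abs ((m:ℝ))]

lemma sqrt2_le_jb (n : ℤ) (hn : n ≠ 0) : Real.sqrt 2 ≤ jb n := by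
  apply Real.sqrt_le_sqrt
  have : (1:ℝ) ≤ (n:ℝ)^2 := by
    have : (1:ℤ) ≤ n^2 := by nlinarith [Int.one_le_abs hn, sq_abs n]
    exact_mod_cast this
  linarith

lemma one_lt_jb (n : ℤ) (hn : n ≠ 0) : 1 < jb n := by
  have := sqrt2_le_jb n hn
  have h2 : (1:ℝ) < Real.sqrt 2 := by
    rw [show (1:ℝ) = Real.sqrt 1 by simp]
    exact Real.sqrt_lt_sqrt (by norm_num) (by norm_num)
  linarith

lemma harm_le (K : ℤ) (hK : 1 ≤ K) :
    ∑ k ∈ Finset.Ioc (0:ℤ) K, (1:ℝ)/(k:ℝ) ≤ 1 + Real.log K := by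
  refine Int.le_induction (motive := fun K _ => ∑ k ∈ Finset.Ioc (0:ℤ) K, (1:ℝ)/(k:ℝ) ≤ 1 + Real.log K) ?_ ?_ K hK
  · have : Finset.Ioc (0:ℤ) 1 = {1} := by decide
    simp [this]
  · intro K hK ih
    have hins : Finset.Ioc (0:ℤ) (K+1) = insert (K+1) (Finset.Ioc 0 K) := by
      ext x; simp only [Finset.mem_Ioc, Finset.mem_insert]; omega
    have hnot : (K+1) ∉ Finset.Ioc (0:ℤ) K := by simp
    rw [hins, Finset.sum_insert hnot]
    have hK0 : (0:ℝ) < K := by exact_mod_cast hK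
    have hK1 : (0:ℝ) < (K:ℝ) + 1 := by linarith
    have hlog : Real.log K - Real.log ((K:ℝ)+1) ≤ -(1/((K:ℝ)+1)) := by
      have h1 : Real.log ((K:ℝ)/((K:ℝ)+1)) ≤ (K:ℝ)/((K:ℝ)+1) - 1 :=
        Real.log_le_sub_one_of_pos (by positivity)
      rw [Real.log_div (ne_of_gt hK0) (ne_of_gt hK1)] at h1
      have h2 : (K:ℝ)/((K:ℝ)+1) - 1 = -(1/((K:ℝ)+1)) := by field_simp; ring
      linarith [h2 ▸ h1]
    have hcast : ((K+1 : ℤ) : ℝ) = (K:ℝ)+1 := by push_cast; ring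
    rw [hcast]
    linarith

lemma count_bound (M : ℝ) (hM : 0 ≤ M) (K : ℤ) (hK1 : 1 ≤ K) (hK : M ≤ (K:ℝ)) (hK2 : (K:ℝ) ≤ M + 1) :
    (((Finset.Icc (-K) K ×ˢ Finset.Icc (-K) K).filter
      (fun p : ℤ × ℤ => p.1 ≠ 0 ∧ p.2 ≠ 0 ∧ |(p.1 : ℝ) * (p.2 : ℝ)| ≤ M)).card : ℝ)
    ≤ 8 * (M + 1) * (1 + Real.log K) := by
  classical
  simp only [show ∀ (k j : ℤ), |(k:ℝ) * (j:ℝ)| = ((|k * j| : ℤ) : ℝ) from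
    fun k j => by push_cast; ring]
  rw [← Finset.sum_boole]
  rw [Finset.sum_product]
  have hinner : ∀ k ∈ Finset.Icc (-K) K,
      (∑ j ∈ Finset.Icc (-K) K,
        if k ≠ 0 ∧ j ≠ 0 ∧ ((|k * j| : ℤ) : ℝ) ≤ M then (1:ℝ) else 0)
      ≤ if k = 0 then 0 else 2 * M / ((|k| : ℤ) : ℝ) + 1 := by
    intro k _
    by_cases hk : k = 0
    · simp [hk]
    · rw [if_neg hk]
      have hkpos : (1:ℤ) ≤ |k| := Int.one_le_abs hk
      have hkposR : (1:ℝ) ≤ ((|k| : ℤ) : ℝ) := by exact_mod_cast hkpos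
      set m : ℤ := ⌊M / ((|k| : ℤ) : ℝ)⌋ with hm
      have hm0 : 0 ≤ m := Int.floor_nonneg.2 (by positivity)
      have hmle : (m : ℝ) ≤ M / ((|k| : ℤ) : ℝ) := Int.floor_le _
      have hsub : (Finset.Icc (-K) K).filter
          (fun j => k ≠ 0 ∧ j ≠ 0 ∧ ((|k * j| : ℤ) : ℝ) ≤ M) ⊆ Finset.Icc (-m) m := by
        intro j hj
        simp only [Finset.mem_filter, Finset.mem_Icc] at hj ⊢
        obtain ⟨_, _, hj0, hjM⟩ := hj
        have habs : |j| ≤ m := by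
          rw [hm, Int.le_floor]
          have h1 : ((|j| : ℤ) : ℝ) * ((|k| : ℤ) : ℝ) ≤ M := by
            calc ((|j| : ℤ) : ℝ) * ((|k| : ℤ) : ℝ) = ((|k * j| : ℤ) : ℝ) := by
                  push_cast [abs_mul]; ring
              _ ≤ M := hjM
          rw [le_div_iff₀ (by linarith)]
          exact h1
        exact abs_le.mp habs
      have hcard : ((Finset.Icc (-K) K).filter
          (fun j => k ≠ 0 ∧ j ≠ 0 ∧ ((|k * j| : ℤ) : ℝ) ≤ M)).card ≤ (2 * m + 1).toNat := by
        calc _ ≤ (Finset.Icc (-m) m).card := Finset.card_le_card hsub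
          _ = (m + 1 - -m).toNat := Int.card_Icc _ _
          _ = (2 * m + 1).toNat := by congr 1; ring
      rw [Finset.sum_boole]
      calc (((Finset.Icc (-K) K).filter
          (fun j => k ≠ 0 ∧ j ≠ 0 ∧ ((|k * j| : ℤ) : ℝ) ≤ M)).card : ℝ)
          ≤ (((2 * m + 1).toNat : ℤ) : ℝ) := by exact_mod_cast hcard
        _ = 2 * (m : ℝ) + 1 := by
            rw [Int.toNat_of_nonneg (by omega)]; push_cast; ring
        _ ≤ 2 * M / ((|k| : ℤ) : ℝ) + 1 := by
            have h4 : 2 * (m:ℝ) ≤ 2 * M / ((|k| : ℤ) : ℝ) := by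
              rw [mul_div_assoc]; linarith
            linarith
  calc (∑ k ∈ Finset.Icc (-K) K, ∑ j ∈ Finset.Icc (-K) K,
        if k ≠ 0 ∧ j ≠ 0 ∧ ((|k * j| : ℤ) : ℝ) ≤ M then (1:ℝ) else 0)
      ≤ ∑ k ∈ Finset.Icc (-K) K, (if k = 0 then 0 else 2 * M / ((|k| : ℤ) : ℝ) + 1) :=
        Finset.sum_le_sum hinner
    _ ≤ 8 * (M + 1) * (1 + Real.log K) := by
      set g : ℤ → ℝ := fun k => if k = 0 then 0 else 2 * M / ((|k| : ℤ) : ℝ) + 1 with hg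
      have hsplit : Finset.Icc (-K) K = Finset.Icc (-K) 0 ∪ Finset.Ioc 0 K := by
        ext x; simp only [Finset.mem_Icc, Finset.mem_union, Finset.mem_Ioc]; omega
      have hdisj : Disjoint (Finset.Icc (-K) 0) (Finset.Ioc (0:ℤ) K) := by
        simp only [Finset.disjoint_left, Finset.mem_Icc, Finset.mem_Ioc]
        intro a h1 h2; omega
      have himg : Finset.Icc (-K) (0:ℤ) = (Finset.Icc (0:ℤ) K).image (fun k => -k) := by
        ext x
        simp only [Finset.mem_Icc, Finset.mem_image]
        constructor
        · intro hx; exact ⟨-x, by omega, by omega⟩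
        · rintro ⟨y, hy, rfl⟩; omega
      have hneg : ∑ k ∈ Finset.Icc (-K) 0, g k = ∑ k ∈ Finset.Icc 0 K, g k := by
        rw [himg, Finset.sum_image (by intro a _ b _ h; exact neg_inj.mp h)]
        apply Finset.sum_congr rfl
        intro k _
        simp only [hg, neg_eq_zero, abs_neg]
      have hIccIoc : ∑ k ∈ Finset.Icc (0:ℤ) K, g k = ∑ k ∈ Finset.Ioc (0:ℤ) K, g k := by
        have h1 : Finset.Icc (0:ℤ) K = insert 0 (Finset.Ioc (0:ℤ) K) := by
          ext x; simp only [Finset.mem_Icc, Finset.mem_insert, Finset.mem_Ioc]; omega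
        rw [h1, Finset.sum_insert (by simp)]
        simp [hg]
      have hIoc : ∑ k ∈ Finset.Ioc (0:ℤ) K, g k ≤ 2 * M * (1 + Real.log K) + (M + 1) := by
        have heq : ∀ k ∈ Finset.Ioc (0:ℤ) K, g k = 2 * M * (1 / (k:ℝ)) + 1 := by
          intro k hk
          simp only [Finset.mem_Ioc] at hk
          have hk0 : (0:ℤ) < k := hk.1
          simp only [hg]
          rw [if_neg (by omega), abs_of_pos hk0, mul_one_div, mul_div_assoc]
        rw [Finset.sum_congr rfl heq, Finset.sum_add_distrib, ← Finset.mul_sum]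
        have hcard : ∑ _k ∈ Finset.Ioc (0:ℤ) K, (1:ℝ) = (K:ℝ) := by
          rw [Finset.sum_const, Int.card_Ioc, nsmul_eq_mul, mul_one]
          rw [show ((K - 0).toNat : ℝ) = ((((K - 0).toNat : ℤ)) : ℝ) by push_cast; ring,
            Int.toNat_of_nonneg (by omega)]
          push_cast; ring
        rw [hcard]
        have hharm := harm_le K hK1
        have hKM : (K:ℝ) ≤ M + 1 := hK2
        nlinarith [hM]
      have hlogK : 0 ≤ Real.log K := Real.log_nonneg (by exact_mod_cast hK1)
      rw [hsplit, Finset.sum_union hdisj]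
      calc (∑ k ∈ Finset.Icc (-K) 0, g k) + ∑ k ∈ Finset.Ioc (0:ℤ) K, g k
          = 2 * ∑ k ∈ Finset.Ioc (0:ℤ) K, g k := by rw [hneg, hIccIoc]; ring
        _ ≤ 2 * (2 * M * (1 + Real.log K) + (M + 1)) := by linarith
        _ ≤ 8 * (M + 1) * (1 + Real.log K) := by nlinarith

lemma div_bound (a t u D1 D2 D3 : ℝ) (ha : 0 < a) (ht : 0 ≤ t)
    (h1 : (a/2) ^ t ≤ D1) (h2 : (a/2) ^ t ≤ D2) (h3 : (a/2) ^ t ≤ D3) :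
    a ^ u / (D1 * D2 * D3) ≤ (2:ℝ) ^ (3*t) * a ^ (u - 3*t) := by
  have ha2 : (0:ℝ) < a / 2 := by linarith
  have hq : (0:ℝ) < (a/2) ^ t := Real.rpow_pos_of_pos ha2 t
  have hprod : (a/2) ^ (3*t) ≤ D1 * D2 * D3 := by
    rw [show 3*t = t + t + t by ring, Real.rpow_add ha2, Real.rpow_add ha2]
    have hD1 : 0 < D1 := lt_of_lt_of_le hq h1
    have hD2 : 0 < D2 := lt_of_lt_of_le hq h2
    calc (a/2)^t * (a/2)^t * (a/2)^t ≤ D1 * D2 * (a/2)^t := by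
          apply mul_le_mul_of_nonneg_right _ hq.le
          exact mul_le_mul h1 h2 hq.le hD1.le
      _ ≤ D1 * D2 * D3 := mul_le_mul_of_nonneg_left h3 (by positivity)
  have hppos : (0:ℝ) < (a/2) ^ (3*t) := Real.rpow_pos_of_pos ha2 _
  calc a ^ u / (D1 * D2 * D3) ≤ a ^ u / ((a/2) ^ (3*t)) := by
        apply div_le_div_of_nonneg_left (Real.rpow_nonneg ha.le u) hppos hprod
    _ = (2:ℝ) ^ (3*t) * a ^ (u - 3*t) := by
        rw [Real.div_rpow ha.le (by norm_num : (0:ℝ) ≤ 2), Real.rpow_sub ha,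
          div_div_eq_mul_div]
        have h2t : (2:ℝ) ^ (3*t) ≠ 0 := ne_of_gt (Real.rpow_pos_of_pos (by norm_num) _)
        have hat : a ^ (3*t) ≠ 0 := ne_of_gt (Real.rpow_pos_of_pos ha _)
        field_simp

lemma abs_sub_le' (a b : ℝ) : |a - b| ≤ |a| + |b| := by
  calc |a - b| = |a + -b| := by ring_nf
    _ ≤ |a| + |(-b)| := abs_add_le _ _
    _ = |a| + |b| := by rw [abs_neg]


set_option maxHeartbeats 1000000 in
/-- low-interaction sum in the smoothing estimate,
`∑_{0<|kj| ≤ A|n|^{2-2α}} ⟨n⟩^{2s+2c}/(⟨n+j⟩^{2s}⟨n+k⟩^{2s}⟨n+j+k⟩^{2s})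
  ≲ ⟨n⟩^{-4s+2c+2-2α} log⟨n⟩` for `c < 2s + α - 1`. Here `p.1 = k`, `p.2 = j`. -/
theorem stmt_16 (α s c A : ℝ) (hα : 1 / 2 < α) (hα1 : α < 1)
    (hs : (1 - α) / 2 < s) (hc : c < 2 * s + α - 1) (hA : 0 < A) :
    ∃ C > 0, ∀ n : ℤ,
      (∑' p : ℤ × ℤ,
        if p.1 ≠ 0 ∧ p.2 ≠ 0 ∧ (|p.1 * p.2| : ℝ) ≤ A * (|n| : ℝ) ^ (2 - 2 * α) then
          jb n ^ (2 * s + 2 * c) /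
            (jb (n + p.2) ^ (2 * s) * jb (n + p.1) ^ (2 * s) * jb (n + p.2 + p.1) ^ (2 * s))
        else 0)
        ≤ C * jb n ^ (-4 * s + 2 * c + 2 - 2 * α) * Real.log (jb n) := by
  classical
  have hs0 : 0 < s := by linarith
  have hβpos : 0 < 2 - 2 * α := by linarith
  have hγpos : 0 < 2 * α - 1 := by linarith
  have hsqrt2 : (1:ℝ) < Real.sqrt 2 := by
    rw [show (1:ℝ) = Real.sqrt 1 by simp]
    exact Real.sqrt_lt_sqrt (by norm_num) (by norm_num)
  set ℓ : ℝ := Real.log (Real.sqrt 2) with hℓdef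
  have hℓpos : 0 < ℓ := Real.log_pos hsqrt2
  have hlogA2 : 0 < Real.log (A + 2) := Real.log_pos (by linarith)
  set c₃ : ℝ := (1 + Real.log (A + 2)) / ℓ + 1 with hc₃def
  have hc₃pos : 0 < c₃ := by
    rw [hc₃def]
    have := div_pos (by linarith : (0:ℝ) < 1 + Real.log (A + 2)) hℓpos
    linarith
  set B0 : ℝ := (2:ℝ) ^ (3 * (2 * s)) with hB0def
  have hB0pos : 0 < B0 := Real.rpow_pos_of_pos (by norm_num) _
  set CL : ℝ := B0 * (8 * (A + 1) * c₃) with hCLdef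
  have hCLpos : 0 < CL := by
    apply mul_pos hB0pos
    positivity
  set N₀ : ℝ := max 1 ((4 * A) ^ (1 / (2 * α - 1))) with hN₀def
  have hN₀1 : (1:ℝ) ≤ N₀ := le_max_left _ _
  set N₁ : ℤ := ⌈N₀⌉ with hN₁def
  have hN₁1 : (1:ℤ) ≤ N₁ := by
    have h1 : (1:ℝ) ≤ (N₁:ℝ) := le_trans hN₀1 (Int.le_ceil N₀)
    exact_mod_cast h1
  set e : ℝ := -4 * s + 2 * c + 2 - 2 * α with he
  set f : ℤ → ℤ × ℤ → ℝ := fun n p =>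
    if p.1 ≠ 0 ∧ p.2 ≠ 0 ∧ (|p.1 * p.2| : ℝ) ≤ A * (|n| : ℝ) ^ (2 - 2 * α) then
      jb n ^ (2 * s + 2 * c) /
        (jb (n + p.2) ^ (2 * s) * jb (n + p.1) ^ (2 * s) * jb (n + p.2 + p.1) ^ (2 * s))
    else 0 with hfdef
  set d : ℤ → ℝ := fun n => jb n ^ e * Real.log (jb n) with hddef
  have hdnn : ∀ n : ℤ, 0 ≤ d n := fun n =>
    mul_nonneg (Real.rpow_nonneg (jb_pos n).le e) (Real.log_nonneg (one_le_jb n))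
  have hdpos : ∀ n : ℤ, n ≠ 0 → 0 < d n := fun n hn =>
    mul_pos (Real.rpow_pos_of_pos (jb_pos n) e) (Real.log_pos (one_lt_jb n hn))
  have hne : (Finset.Icc (-N₁) N₁).Nonempty := Finset.nonempty_Icc.mpr (by omega)
  set Cs : ℝ := (Finset.Icc (-N₁) N₁).sup' hne (fun n => (∑' p : ℤ × ℤ, f n p) / d n)
    with hCsdef
  refine ⟨CL + max Cs 0 + 1, by
    have := le_max_right Cs 0
    linarith, fun n => ?_⟩
  show (∑' p : ℤ × ℤ, f n p) ≤ (CL + max Cs 0 + 1) * jb n ^ e * Real.log (jb n)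
  by_cases hn0 : n = 0
  · subst hn0
    have hz : ∀ p : ℤ × ℤ, f 0 p = 0 := by
      intro p
      rw [hfdef]
      dsimp only
      rw [if_neg]
      rintro ⟨h1, h2, h3⟩
      have hz0 : A * (|((0:ℤ):ℝ)|) ^ (2 - 2 * α) = 0 := by
        rw [Int.cast_zero, abs_zero, Real.zero_rpow (by linarith), mul_zero]
      rw [hz0] at h3
      have hone : (1:ℝ) ≤ |(p.1:ℝ) * (p.2:ℝ)| := by
        have h4 : (1:ℤ) ≤ |p.1 * p.2| := Int.one_le_abs (mul_ne_zero h1 h2)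
        have h5 : ((1:ℤ):ℝ) ≤ ((|p.1 * p.2| : ℤ) : ℝ) := by exact_mod_cast h4
        push_cast at h5
        linarith
      linarith
    have hts : (∑' p : ℤ × ℤ, f 0 p) = 0 := by
      simp only [hz]; exact tsum_zero
    have hjb0 : jb 0 = 1 := by simp [jb]
    rw [hts, hjb0, Real.log_one, mul_zero]
  · -- n ≠ 0
    set x : ℝ := |(n:ℝ)| with hxdef
    have hx1 : (1:ℝ) ≤ x := by
      have h1 : (1:ℤ) ≤ |n| := Int.one_le_abs hn0
      have h2 : ((1:ℤ):ℝ) ≤ ((|n| : ℤ) : ℝ) := by exact_mod_cast h1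
      push_cast at h2
      linarith
    have hx0 : (0:ℝ) < x := by linarith
    set M : ℝ := A * x ^ (2 - 2 * α) with hMdef
    have hM0 : (0:ℝ) ≤ M := by positivity
    have ha1 : (1:ℝ) ≤ jb n := one_le_jb n
    have hapos : (0:ℝ) < jb n := jb_pos n
    have hxa : x ≤ jb n := by
      have := abs_le_jb n
      push_cast at this
      linarith
    have hla : ℓ ≤ Real.log (jb n) :=
      Real.log_le_log (by positivity) (sqrt2_le_jb n hn0)
    by_cases hbigcase : N₀ ≤ x
    · -- large |n|
      have hbig : 4 * M ≤ x := by
        have h4A : 4 * A ≤ x ^ (2 * α - 1) := by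
          have hrr : ((4 * A) ^ (1 / (2 * α - 1))) ^ (2 * α - 1) = 4 * A := by
            rw [one_div, Real.rpow_inv_rpow (by linarith) (ne_of_gt hγpos)]
          calc 4 * A = ((4 * A) ^ (1 / (2 * α - 1))) ^ (2 * α - 1) := hrr.symm
            _ ≤ N₀ ^ (2 * α - 1) :=
                Real.rpow_le_rpow (Real.rpow_nonneg (by linarith) _)
                  (le_max_right _ _) hγpos.le
            _ ≤ x ^ (2 * α - 1) :=
                Real.rpow_le_rpow (by linarith) hbigcase hγpos.le
        calc 4 * M = (4 * A) * x ^ (2 - 2 * α) := by rw [hMdef]; ring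
          _ ≤ x ^ (2 * α - 1) * x ^ (2 - 2 * α) :=
              mul_le_mul_of_nonneg_right h4A (Real.rpow_nonneg hx0.le _)
          _ = x := by
              rw [← Real.rpow_add hx0]
              norm_num
      set K : ℤ := max 1 ⌈M⌉ with hKdef
      have hK1 : (1:ℤ) ≤ K := le_max_left _ _
      have hMK : M ≤ (K:ℝ) := by
        have h1 : ((⌈M⌉ : ℤ) : ℝ) ≤ (K:ℝ) := by exact_mod_cast le_max_right 1 ⌈M⌉
        linarith [Int.le_ceil M]
      have hK2 : (K:ℝ) ≤ M + 1 := by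
        rw [hKdef]
        push_cast [Int.cast_max]
        apply max_le (by linarith)
        linarith [Int.ceil_lt_add_one M]
      set box := Finset.Icc (-K) K ×ˢ Finset.Icc (-K) K with hboxdef
      have hvanish : ∀ p : ℤ × ℤ, p ∉ box → f n p = 0 := by
        intro p hp
        rw [hfdef]
        dsimp only
        rw [if_neg]
        rintro ⟨h1, h2, h3⟩
        apply hp
        rw [← hxdef, ← hMdef] at h3
        have habs : |p.1 * p.2| ≤ K := by
          have h4 : |(p.1:ℝ) * (p.2:ℝ)| ≤ (K:ℝ) := le_trans h3 hMK
          have h5 : ((|p.1 * p.2| : ℤ) : ℝ) ≤ ((K:ℤ):ℝ) := by push_cast; push_cast at h4; linarith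
          exact_mod_cast h5
        have hk1 : |p.1| ≤ K := by
          have := Int.one_le_abs h2
          nlinarith [abs_mul p.1 p.2 ▸ habs, abs_nonneg p.1]
        have hj1 : |p.2| ≤ K := by
          have := Int.one_le_abs h1
          nlinarith [abs_mul p.1 p.2 ▸ habs, abs_nonneg p.2]
        rw [hboxdef, Finset.mem_product, Finset.mem_Icc, Finset.mem_Icc]
        exact ⟨abs_le.mp hk1, abs_le.mp hj1⟩
      have htsum : (∑' p : ℤ × ℤ, f n p) = ∑ p ∈ box, f n p := tsum_eq_sum hvanish
      set B : ℝ := B0 * jb n ^ (2 * s + 2 * c - 3 * (2 * s)) with hBdef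
      have hBnn : (0:ℝ) ≤ B :=
        mul_nonneg hB0pos.le (Real.rpow_nonneg hapos.le _)
      have hD : ∀ m : ℤ, x ≤ 2 * |(m:ℝ)| → (jb n / 2) ^ (2 * s) ≤ jb m ^ (2 * s) := by
        intro m hm
        apply Real.rpow_le_rpow (by positivity) _ (by linarith)
        have h1 : ((|n| : ℤ) : ℝ) ≤ 2 * ((|m| : ℤ) : ℝ) := by
          push_cast
          rw [← hxdef] at *
          push_cast at hm
          linarith [hm]
        have := jb_le_two_mul m n h1
        linarith
      have htri : ∀ u v : ℤ, |((u:ℤ):ℝ)| ≤ |((u + v : ℤ):ℝ)| + |((v:ℤ):ℝ)| := by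
        intro u v
        have h1 : ((u:ℤ):ℝ) = ((u + v : ℤ):ℝ) + (-(v:ℝ)) := by push_cast; ring
        rw [h1]
        calc |((u + v : ℤ):ℝ) + (-(v:ℝ))| ≤ |((u + v : ℤ):ℝ)| + |(-(v:ℝ))| := abs_add_le _ _
          _ = |((u + v : ℤ):ℝ)| + |(v:ℝ)| := by rw [abs_neg]
      have hterm : ∀ p ∈ box, f n p ≤
          (if p.1 ≠ 0 ∧ p.2 ≠ 0 ∧ |(p.1 : ℝ) * (p.2 : ℝ)| ≤ M then B else 0) := by
        intro p _
        rw [hfdef]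
        dsimp only
        rw [← hxdef, ← hMdef]
        by_cases hcond : p.1 ≠ 0 ∧ p.2 ≠ 0 ∧ |(p.1 : ℝ) * (p.2 : ℝ)| ≤ M
        · rw [if_pos hcond, if_pos hcond]
          obtain ⟨hk0, hj0, hkj⟩ := hcond
          have h1k : (1:ℝ) ≤ |(p.1:ℝ)| := by
            have h4 : (1:ℤ) ≤ |p.1| := Int.one_le_abs hk0
            have h5 : ((1:ℤ):ℝ) ≤ ((|p.1| : ℤ) : ℝ) := by exact_mod_cast h4
            push_cast at h5; linarith
          have h1j : (1:ℝ) ≤ |(p.2:ℝ)| := by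
            have h4 : (1:ℤ) ≤ |p.2| := Int.one_le_abs hj0
            have h5 : ((1:ℤ):ℝ) ≤ ((|p.2| : ℤ) : ℝ) := by exact_mod_cast h4
            push_cast at h5; linarith
          have habsmul : |(p.1:ℝ)| * |(p.2:ℝ)| ≤ M := by
            rw [← abs_mul]; exact hkj
          have hkM : |(p.1:ℝ)| ≤ M :=
            le_trans (le_mul_of_one_le_right (abs_nonneg _) h1j) habsmul
          have hjM : |(p.2:ℝ)| ≤ M := by
            have : |(p.2:ℝ)| ≤ |(p.1:ℝ)| * |(p.2:ℝ)| :=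
              le_mul_of_one_le_left (abs_nonneg _) h1k
            linarith
          have hb1 : x ≤ 2 * |((n + p.2 : ℤ):ℝ)| := by
            have h7 : x ≤ |((n + p.2 : ℤ):ℝ)| + |(p.2:ℝ)| := by
              rw [hxdef]
              have h8 : (n:ℝ) = ((n + p.2 : ℤ):ℝ) - (p.2:ℝ) := by push_cast; ring
              rw [h8]
              exact abs_sub_le' _ _
            linarith
          have hb2 : x ≤ 2 * |((n + p.1 : ℤ):ℝ)| := by
            have h7 : x ≤ |((n + p.1 : ℤ):ℝ)| + |(p.1:ℝ)| := by
              rw [hxdef]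
              have h8 : (n:ℝ) = ((n + p.1 : ℤ):ℝ) - (p.1:ℝ) := by push_cast; ring
              rw [h8]
              exact abs_sub_le' _ _
            linarith
          have hb3 : x ≤ 2 * |((n + p.2 + p.1 : ℤ):ℝ)| := by
            have h7 : x ≤ |((n + p.2 + p.1 : ℤ):ℝ)| + |(p.2:ℝ)| + |(p.1:ℝ)| := by
              rw [hxdef]
              have h8 : (n:ℝ) = (((n + p.2 + p.1 : ℤ):ℝ) - (p.1:ℝ)) - (p.2:ℝ) := by
                push_cast; ring
              rw [h8]
              calc |(((n + p.2 + p.1 : ℤ):ℝ) - (p.1:ℝ)) - (p.2:ℝ)|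
                  ≤ |((n + p.2 + p.1 : ℤ):ℝ) - (p.1:ℝ)| + |(p.2:ℝ)| := abs_sub_le' _ _
                _ ≤ (|((n + p.2 + p.1 : ℤ):ℝ)| + |(p.1:ℝ)|) + |(p.2:ℝ)| := by
                    linarith [abs_sub_le' ((n + p.2 + p.1 : ℤ):ℝ) ((p.1:ℝ))]
                _ = |((n + p.2 + p.1 : ℤ):ℝ)| + |(p.2:ℝ)| + |(p.1:ℝ)| := by ring
            linarith
          have hd1 := hD _ hb1
          have hd2 := hD _ hb2
          have hd3 := hD _ hb3
          exact div_bound (jb n) (2*s) (2*s+2*c) _ _ _ hapos (by linarith) hd1 hd2 hd3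
        · rw [if_neg hcond, if_neg hcond]
      have hcount := count_bound M hM0 K hK1 hMK hK2
      have hrp1 : x ^ (2 - 2*α) ≤ jb n ^ (2 - 2*α) :=
        Real.rpow_le_rpow hx0.le hxa hβpos.le
      have hrp2 : (1:ℝ) ≤ jb n ^ (2 - 2*α) := by
        calc (1:ℝ) = (1:ℝ) ^ (2 - 2*α) := (Real.one_rpow _).symm
          _ ≤ jb n ^ (2 - 2*α) := Real.rpow_le_rpow zero_le_one ha1 hβpos.le
      have hF1 : M + 1 ≤ (A + 1) * jb n ^ (2 - 2*α) := by
        rw [hMdef]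
        have h4 := mul_le_mul_of_nonneg_left hrp1 hA.le
        have h5 : (A + 1) * jb n ^ (2 - 2*α) = A * jb n ^ (2 - 2*α) + jb n ^ (2 - 2*α) := by
          ring
        linarith only [h4, h5, hrp2]
      have hKR : (1:ℝ) ≤ (K:ℝ) := by exact_mod_cast hK1
      have hF2 : 1 + Real.log K ≤ c₃ * Real.log (jb n) := by
        have hMa : M ≤ A * jb n := by
          have h2 : jb n ^ (2 - 2*α) ≤ jb n ^ (1:ℝ) :=
            Real.rpow_le_rpow_of_exponent_le ha1 (by linarith)
          rw [Real.rpow_one] at h2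
          rw [hMdef]
          exact mul_le_mul_of_nonneg_left (le_trans hrp1 h2) hA.le
        have hlogK : Real.log K ≤ Real.log ((A + 2) * jb n) :=
          Real.log_le_log (by linarith) (by
            have hexp : (A + 2) * jb n = A * jb n + 2 * jb n := by ring
            linarith only [hK2, hMa, hexp, ha1])
        rw [Real.log_mul (by linarith) (ne_of_gt hapos)] at hlogK
        have hcoef : (0:ℝ) ≤ (1 + Real.log (A + 2)) / ℓ :=
          le_of_lt (div_pos (by linarith) hℓpos)
        have hkey : 1 + Real.log (A + 2) ≤ ((1 + Real.log (A + 2)) / ℓ) * Real.log (jb n) := by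
          have h3 : ((1 + Real.log (A + 2)) / ℓ) * ℓ = 1 + Real.log (A + 2) :=
            div_mul_cancel₀ _ (ne_of_gt hℓpos)
          have h4 := mul_le_mul_of_nonneg_left hla hcoef
          linarith only [h3, h4]
        rw [hc₃def]
        have hloga : (0:ℝ) ≤ Real.log (jb n) := Real.log_nonneg ha1
        have hexp2 : ((1 + Real.log (A + 2)) / ℓ + 1) * Real.log (jb n)
            = ((1 + Real.log (A + 2)) / ℓ) * Real.log (jb n) + Real.log (jb n) := by ring
        linarith only [hlogK, hkey, hloga, hexp2]
      have hF3 : jb n ^ (2*s + 2*c - 3*(2*s)) * jb n ^ (2 - 2*α) = jb n ^ e := by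
        rw [← Real.rpow_add hapos]
        congr 1
        rw [he]; ring
      calc (∑' p : ℤ × ℤ, f n p) = ∑ p ∈ box, f n p := htsum
        _ ≤ ∑ p ∈ box, (if p.1 ≠ 0 ∧ p.2 ≠ 0 ∧ |(p.1 : ℝ) * (p.2 : ℝ)| ≤ M then B else 0) :=
            Finset.sum_le_sum hterm
        _ = ((box.filter (fun p : ℤ × ℤ =>
              p.1 ≠ 0 ∧ p.2 ≠ 0 ∧ |(p.1 : ℝ) * (p.2 : ℝ)| ≤ M)).card : ℝ) * B := by
            rw [← Finset.sum_filter, Finset.sum_const, nsmul_eq_mul]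
        _ ≤ (8 * (M + 1) * (1 + Real.log K)) * B :=
            mul_le_mul_of_nonneg_right hcount hBnn
        _ ≤ (8 * ((A + 1) * jb n ^ (2 - 2*α)) * (c₃ * Real.log (jb n))) * B := by
            apply mul_le_mul_of_nonneg_right _ hBnn
            have hnn1 : (0:ℝ) ≤ 1 + Real.log K := by
              have := Real.log_nonneg hKR
              linarith
            have hnn2 : (0:ℝ) ≤ 8 * ((A + 1) * jb n ^ (2 - 2*α)) := by positivity
            calc 8 * (M + 1) * (1 + Real.log K)
                ≤ 8 * ((A + 1) * jb n ^ (2 - 2*α)) * (1 + Real.log K) := by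
                  apply mul_le_mul_of_nonneg_right _ hnn1
                  linarith only [hF1]
              _ ≤ 8 * ((A + 1) * jb n ^ (2 - 2*α)) * (c₃ * Real.log (jb n)) :=
                  mul_le_mul_of_nonneg_left hF2 hnn2
        _ = CL * jb n ^ e * Real.log (jb n) := by
            rw [hCLdef, hBdef, hB0def]
            linear_combination (8 * (A + 1) * c₃ * Real.log (jb n) * (2:ℝ) ^ (3*(2*s))) * hF3
        _ ≤ (CL + max Cs 0 + 1) * jb n ^ e * Real.log (jb n) := by
            have h1 : (0:ℝ) ≤ jb n ^ e := Real.rpow_nonneg hapos.le e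
            have h2 : (0:ℝ) ≤ Real.log (jb n) := Real.log_nonneg ha1
            have h3 : CL ≤ CL + max Cs 0 + 1 := by
              have := le_max_right Cs 0
              linarith
            exact mul_le_mul_of_nonneg_right (mul_le_mul_of_nonneg_right h3 h1) h2
    · -- small |n|
      have hxN : x ≤ (N₁:ℝ) :=
        le_trans (le_of_not_ge hbigcase) (Int.le_ceil N₀)
      have hmem : n ∈ Finset.Icc (-N₁) N₁ := by
        rw [Finset.mem_Icc]
        have h1 : |n| ≤ N₁ := by
          have h2 : ((|n| : ℤ) : ℝ) ≤ (N₁:ℝ) := by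
            push_cast
            rw [← hxdef]
            exact hxN
          exact_mod_cast h2
        exact abs_le.mp h1
      have hd0 := hdpos n hn0
      have hle : (∑' p : ℤ × ℤ, f n p) / d n ≤ Cs := by
        rw [hCsdef]
        exact Finset.le_sup' (fun m => (∑' p : ℤ × ℤ, f m p) / d m) hmem
      calc (∑' p : ℤ × ℤ, f n p)
          = ((∑' p : ℤ × ℤ, f n p) / d n) * d n :=
            (div_mul_cancel₀ _ (ne_of_gt hd0)).symm
        _ ≤ Cs * d n := mul_le_mul_of_nonneg_right hle (hdnn n)
        _ ≤ (CL + max Cs 0 + 1) * d n := by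
            apply mul_le_mul_of_nonneg_right _ (hdnn n)
            have := le_max_left Cs 0
            linarith
        _ = (CL + max Cs 0 + 1) * jb n ^ e * Real.log (jb n) := by
            simp only [hddef]
            ring
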